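/- arXiv:1010.0627 — 3 statements merged into one kernel-verified Lean document; each statement's English description precedes it below -/
import Mathlib

section
/- Let $c>0$, $\theta,\delta,\sigma>0$ with $\mu=\theta\sigma^2$, and let $g$ be twice differentiable at $y>0$ with $c+g(y)\ne 0$ and $g(y)\ne 0$. Define $\tilde{\mu}(y)=\frac{\mu g'(y)y+\frac{\sigma^2}{2}g''(y)y^2-\delta(g(y)-g'(y)y)(1+g(y)/c)}{g(y)}$ and $\tilde{\sigma}(y)=\frac{\sigma g'(y)y}{g(y)}$. Then the Merton-rule identity $\frac{\tilde{\mu}(y)}{\tilde{\sigma}(y)^2}=\frac{g(y)}{c+g(y)}$ holds if and only if $g''(y)=\frac{2g'(y)^2}{c+g(y)}-\frac{2\theta g'(y)}{y}+\frac{2\delta}{\sigma^2}\left(1+\frac{g(y)}{c}\right)\left(\frac{g(y)}{y^2}-\frac{g'(y)}{y}\right)$, provided $g'(y)\ne 0$. -/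
/-- Merton's rule for the candidate shadow price is equivalent to the
shadow-price ODE. -/
theorem merton_rule_iff_ode
    (c θ δ σ μ : ℝ) (hc : 0 < c) (hθ : 0 < θ) (hδ : 0 < δ) (hσ : 0 < σ)
    (hμ : μ = θ * σ ^ 2)
    (g : ℝ → ℝ) (y : ℝ) (hy : 0 < y)
    (hg1 : DifferentiableAt ℝ g y) (hg2 : DifferentiableAt ℝ (deriv g) y)
    (hden : c + g y ≠ 0) (hgy : g y ≠ 0) (hg' : deriv g y ≠ 0) :
    (let μt : ℝ := (μ * deriv g y * y + σ ^ 2 / 2 * deriv (deriv g) y * y ^ 2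
        - δ * (g y - deriv g y * y) * (1 + g y / c)) / g y;
     let σt : ℝ := σ * deriv g y * y / g y;
     μt / σt ^ 2 = g y / (c + g y)) ↔
    deriv (deriv g) y = 2 * (deriv g y) ^ 2 / (c + g y) - 2 * θ * deriv g y / y
      + 2 * δ / σ ^ 2 * (1 + g y / c) * (g y / y ^ 2 - deriv g y / y) := by
  set a := g y with ha
  set b := deriv g y with hb
  set d := deriv (deriv g) y with hd
  have hy' := hy.ne'
  have hσ' := hσ.ne'
  have hc' := hc.ne'
  subst hμ
  simp only
  constructor <;> intro h <;> field_simp at h ⊢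
  · apply mul_left_cancel₀ (pow_ne_zero 2 hgy)
    linear_combination a ^ 2 * h
  · apply mul_left_cancel₀ (pow_ne_zero 2 hy')
    linear_combination y ^ 2 * h
end

section
/- Let $g(s,c)$ be the analytic solution of $g''=F(s,g,g',c)$ with $g(1,c)=\partial_s g(1,c)=1$ (with $F$ as in the shadow-price ODE, $\theta\in(0,1)$, $\bar{c}=(1-\theta)/\theta$). Then the function $\Phi(s,c)=\frac{g(s,c)-s\,\partial_s g(s,c)}{s-1}$ (extended by continuity to $s=1$) satisfies $\Phi(1,\bar{c})=0$ and $\partial_s\Phi(1,\bar{c})=\theta(\theta-1)\ne 0$. Consequently, by the implicit function theorem there is an analytic function $H(c)$ with $H(\bar{c})=1$, $H'(\bar{c})=\frac{2\theta}{1-\theta}$, and $\Phi(H(c),c)=0$ for $c$ near $\bar{c}$. -/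
open Set Metric Filter

open scoped NNReal ENNReal

set_option maxHeartbeats 1000000 in
lemma analyticAt_slice_integral {F : ℝ × ℝ → ℝ} {x₀ : ℝ × ℝ}
    (hF : AnalyticAt ℝ F x₀) :
    AnalyticAt ℝ (fun q : ℝ × ℝ => ∫ t in (0:ℝ)..1, F (x₀.1 + t * (q.1 - x₀.1), q.2)) x₀ := by
  obtain ⟨p, R, hR⟩ := hF
  obtain ⟨r, hr0, hrR⟩ : ∃ r : ℝ≥0, 0 < r ∧ (r : ℝ≥0∞) < R :=
    ENNReal.lt_iff_exists_nnreal_btwn.1 hR.r_pos |>.imp (fun r ⟨h1, h2⟩ => ⟨by exact_mod_cast h1, h2⟩)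
  set π1 : ℝ × ℝ →L[ℝ] ℝ × ℝ :=
    (ContinuousLinearMap.inl ℝ ℝ ℝ).comp (ContinuousLinearMap.fst ℝ ℝ ℝ) with hπ1def
  set π2 : ℝ × ℝ →L[ℝ] ℝ × ℝ :=
    (ContinuousLinearMap.inr ℝ ℝ ℝ).comp (ContinuousLinearMap.snd ℝ ℝ ℝ) with hπ2def
  have hπ1 : ∀ y : ℝ × ℝ, π1 y = (y.1, 0) := fun y => rfl
  have hπ2 : ∀ y : ℝ × ℝ, π2 y = (0, y.2) := fun y => rfl
  set q : FormalMultilinearSeries ℝ (ℝ × ℝ) ℝ := fun n =>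
    ∑ S : Finset (Fin n), (((S.card : ℝ) + 1))⁻¹ •
      (p n).compContinuousLinearMap (fun i => if i ∈ S then π1 else π2) with hqdef
  -- diagonal identity
  have hdiag : ∀ (y : ℝ × ℝ) (n : ℕ),
      (∫ t in (0:ℝ)..1, (p n) (fun _ => ((t * y.1, y.2) : ℝ × ℝ)))
        = q n (fun _ => y) := by
    intro y n
    have key : ∀ t : ℝ, (p n) (fun _ => ((t * y.1, y.2) : ℝ × ℝ))
        = ∑ S : Finset (Fin n), t ^ S.card •
            (p n) (fun i => if i ∈ S then π1 y else π2 y) := by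
      intro t
      have e1 : (fun _ : Fin n => ((t * y.1, y.2) : ℝ × ℝ))
          = (fun _ : Fin n => t • π1 y) + (fun _ : Fin n => π2 y) := by
        funext i
        simp [hπ1, hπ2, Prod.ext_iff]
      rw [e1, (p n).map_add_univ]
      refine Finset.sum_congr rfl (fun S _ => ?_)
      have e2 : S.piecewise (fun _ : Fin n => t • π1 y) (fun _ : Fin n => π2 y)
          = S.piecewise (fun i => t • (if i ∈ S then π1 y else π2 y))
              (fun i => if i ∈ S then π1 y else π2 y) := by
        funext i
        by_cases hi : i ∈ S <;> simp [Finset.piecewise, hi]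
      rw [e2, (p n).map_piecewise_smul (fun _ => t)]
      simp [Finset.prod_const]
    have : (∫ t in (0:ℝ)..1, (p n) (fun _ => ((t * y.1, y.2) : ℝ × ℝ)))
        = ∑ S : Finset (Fin n), (((S.card : ℝ) + 1))⁻¹ •
            (p n) (fun i => if i ∈ S then π1 y else π2 y) := by
      rw [intervalIntegral.integral_congr (g := fun t => ∑ S : Finset (Fin n), t ^ S.card •
            (p n) (fun i => if i ∈ S then π1 y else π2 y)) (fun t _ => key t)]
      rw [intervalIntegral.integral_finset_sum]
      · refine Finset.sum_congr rfl (fun S _ => ?_)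
        rw [intervalIntegral.integral_smul_const, integral_pow]
        norm_num
      · intro S _
        exact ((continuous_pow S.card).smul continuous_const).intervalIntegrable _ _
    rw [this, hqdef]
    simp only [ContinuousMultilinearMap.sum_apply, ContinuousMultilinearMap.smul_apply,
      ContinuousMultilinearMap.compContinuousLinearMap_apply]
    refine Finset.sum_congr rfl (fun S _ => ?_)
    have e : (fun i : Fin n => (if i ∈ S then π1 else π2) y)
        = fun i : Fin n => if i ∈ S then π1 y else π2 y := by
      funext i; split <;> rfl
    rw [e]
  -- norm facts
  have hπn : ∀ i : Bool, True := fun _ => trivial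
  have hπ1n : ‖π1‖ ≤ 1 := by
    refine ContinuousLinearMap.opNorm_le_bound _ zero_le_one (fun y => ?_)
    rw [hπ1 y, one_mul, Prod.norm_def, Prod.norm_def]
    simp only [norm_zero]
    exact max_le (le_max_left _ _) (le_max_of_le_right (norm_nonneg _))
  have hπ2n : ‖π2‖ ≤ 1 := by
    refine ContinuousLinearMap.opNorm_le_bound _ zero_le_one (fun y => ?_)
    rw [hπ2 y, one_mul, Prod.norm_def, Prod.norm_def]
    simp only [norm_zero]
    exact max_le (le_max_of_le_left (norm_nonneg _)) (le_max_right _ _)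
  have hqn : ∀ n, ‖q n‖ ≤ 2 ^ n * ‖p n‖ := by
    intro n
    calc ‖q n‖ ≤ ∑ S : Finset (Fin n), ‖(((S.card : ℝ) + 1))⁻¹ •
        (p n).compContinuousLinearMap (fun i => if i ∈ S then π1 else π2)‖ := norm_sum_le _ _
    _ ≤ ∑ _S : Finset (Fin n), ‖p n‖ := by
        refine Finset.sum_le_sum fun S _ => ?_
        refine le_trans (ContinuousMultilinearMap.opNorm_smul_le _ _) ?_
        have h1 : ‖(((S.card : ℝ) + 1))⁻¹‖ ≤ 1 := by
          rw [Real.norm_eq_abs, abs_of_nonneg (by positivity)]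
          rw [inv_le_one_iff₀]
          right
          have : (0:ℝ) ≤ (S.card : ℝ) := Nat.cast_nonneg _
          linarith
        have h2 : ‖(p n).compContinuousLinearMap (fun i => if i ∈ S then π1 else π2)‖
            ≤ ‖p n‖ := by
          refine le_trans (ContinuousMultilinearMap.norm_compContinuousLinearMap_le _ _) ?_
          have hprod : (∏ i : Fin n, ‖(if i ∈ S then π1 else π2)‖) ≤ 1 :=
            Finset.prod_le_one (fun i _ => norm_nonneg _)
              (fun i _ => by split <;> assumption)
          calc ‖p n‖ * ∏ i : Fin n, ‖(if i ∈ S then π1 else π2)‖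
              ≤ ‖p n‖ * 1 := by
                exact mul_le_mul_of_nonneg_left hprod (norm_nonneg _)
          _ = ‖p n‖ := mul_one _
        calc ‖(((S.card : ℝ) + 1))⁻¹‖ * ‖(p n).compContinuousLinearMap
              (fun i => if i ∈ S then π1 else π2)‖
            ≤ 1 * ‖p n‖ := mul_le_mul h1 h2 (norm_nonneg _) zero_le_one
        _ = ‖p n‖ := one_mul _
    _ = 2 ^ n * ‖p n‖ := by
        rw [Finset.sum_const, Finset.card_univ, Fintype.card_finset, Fintype.card_fin,
          nsmul_eq_mul]
        push_cast
        ring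
  obtain ⟨C, hC0, hC⟩ := p.norm_mul_pow_le_of_lt_radius (lt_of_lt_of_le hrR hR.r_le)
  have hrad : (↑(r / 2) : ℝ≥0∞) ≤ q.radius := by
    apply q.le_radius_of_bound C
    intro n
    have h2pos : (0:ℝ) < 2 ^ n := by positivity
    have e1 : ((↑(r/2) : ℝ)) = (r : ℝ) / 2 := by
      rw [NNReal.coe_div]; norm_num
    calc ‖q n‖ * (↑(r/2) : ℝ) ^ n ≤ (2 ^ n * ‖p n‖) * ((r:ℝ)/2) ^ n := by
          rw [e1]
          exact mul_le_mul_of_nonneg_right (hqn n) (by positivity)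
    _ = ‖p n‖ * (r:ℝ) ^ n := by
          rw [div_pow]
          field_simp
    _ ≤ C := hC n
  have hrhalf : (0:ℝ≥0) < r / 2 := div_pos hr0 two_pos
  have main : HasFPowerSeriesOnBall
      (fun z : ℝ × ℝ => ∫ t in (0:ℝ)..1, F (x₀.1 + t * (z.1 - x₀.1), z.2)) q x₀ (↑(r/2)) := by
    refine ⟨hrad, ENNReal.coe_pos.2 hrhalf, ?_⟩
    intro y hy
    rw [mem_emetric_ball_zero_iff, enorm_eq_nnnorm, ENNReal.coe_lt_coe] at hy
    have hyr : ‖y‖ < (r:ℝ) := by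
      have := NNReal.coe_lt_coe.2 (lt_of_lt_of_le hy (half_le_self zero_le))
      simpa [coe_nnnorm] using this
    have hint : ∀ t : ℝ, (x₀.1 + t * ((x₀ + y).1 - x₀.1), (x₀ + y).2)
        = x₀ + ((t * y.1, y.2) : ℝ × ℝ) := by
      intro t
      have h1 : (x₀ + y).1 = x₀.1 + y.1 := rfl
      have h2 : (x₀ + y).2 = x₀.2 + y.2 := rfl
      have h3 : x₀ + ((t * y.1, y.2) : ℝ × ℝ) = (x₀.1 + t * y.1, x₀.2 + y.2) := rfl
      rw [h1, h2, h3, Prod.mk.injEq]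
      exact ⟨by ring, rfl⟩
    have hz : ∀ t : ℝ, |t| ≤ 1 → ‖((t * y.1, y.2) : ℝ × ℝ)‖ ≤ ‖y‖ := by
      intro t ht
      rw [Prod.norm_def, Prod.norm_def]
      refine max_le_max ?_ le_rfl
      rw [Real.norm_eq_abs, Real.norm_eq_abs, abs_mul]
      exact mul_le_of_le_one_left (abs_nonneg _) ht
    have hsum := intervalIntegral.hasSum_integral_of_dominated_convergence
      (μ := MeasureTheory.volume) (a := (0:ℝ)) (b := 1)
      (F := fun n t => (p n) (fun _ => ((t * y.1, y.2) : ℝ × ℝ)))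
      (f := fun t => F (x₀ + ((t * y.1, y.2) : ℝ × ℝ)))
      (bound := fun n _ => ‖p n‖ * ‖y‖ ^ n)
      (fun n => (((p n).cont.comp (continuous_pi (fun _ =>
        ((continuous_id.mul continuous_const).prodMk continuous_const)))).aestronglyMeasurable))
      (fun n => Filter.Eventually.of_forall (fun t ht => ?_))
      (Filter.Eventually.of_forall (fun t ht => ?_))
      intervalIntegrable_const
      (Filter.Eventually.of_forall (fun t ht => ?_))
    · have : (fun n => ∫ t in (0:ℝ)..1, (p n) (fun _ => ((t * y.1, y.2) : ℝ × ℝ)))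
          = fun n => q n (fun _ => y) := by
        funext n; exact hdiag y n
      rw [this] at hsum
      have e2 : (∫ t in (0:ℝ)..1, F (x₀ + ((t * y.1, y.2) : ℝ × ℝ)))
          = ∫ t in (0:ℝ)..1, F (x₀.1 + t * ((x₀ + y).1 - x₀.1), (x₀ + y).2) := by
        refine intervalIntegral.integral_congr (fun t _ => ?_)
        rw [hint t]
      rw [e2] at hsum
      exact hsum
    · -- bound
      have ht1 : |t| ≤ 1 := by
        rw [uIoc_of_le (zero_le_one)] at ht
        rw [abs_of_pos ht.1]; exact ht.2
      calc ‖(p n) (fun _ => ((t * y.1, y.2) : ℝ × ℝ))‖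
          ≤ ‖p n‖ * ∏ _i : Fin n, ‖((t * y.1, y.2) : ℝ × ℝ)‖ := (p n).le_opNorm _
      _ = ‖p n‖ * ‖((t * y.1, y.2) : ℝ × ℝ)‖ ^ n := by
          rw [Finset.prod_const, Finset.card_univ, Fintype.card_fin]
      _ ≤ ‖p n‖ * ‖y‖ ^ n := by
          exact mul_le_mul_of_nonneg_left
            (pow_le_pow_left₀ (norm_nonneg _) (hz t ht1) n) (norm_nonneg _)
    · -- summable
      have : (↑‖y‖₊ : ℝ≥0∞) < p.radius := by
        refine lt_of_lt_of_le ?_ hR.r_le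
        exact lt_trans (ENNReal.coe_lt_coe.2 (lt_of_lt_of_le hy (half_le_self zero_le))) hrR
      have := p.summable_norm_mul_pow this
      simpa [coe_nnnorm] using this
    · -- limit
      have ht1 : |t| ≤ 1 := by
        rw [uIoc_of_le (zero_le_one)] at ht
        rw [abs_of_pos ht.1]; exact ht.2
      apply hR.hasSum
      rw [mem_emetric_ball_zero_iff]
      refine lt_of_le_of_lt ?_ hrR
      rw [enorm_eq_nnnorm, ENNReal.coe_le_coe]
      have : ‖((t * y.1, y.2) : ℝ × ℝ)‖ ≤ (r:ℝ) := le_trans (hz t ht1) (le_of_lt hyr)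
      exact_mod_cast this
  exact main.analyticAt

lemma hasDerivAt_slice1 {F : ℝ × ℝ → ℝ} {s c : ℝ} (h : DifferentiableAt ℝ F (s, c)) :
    HasDerivAt (fun s' => F (s', c)) (fderiv ℝ F (s, c) (1, 0)) s := by
  have h1 : HasDerivAt (fun s' : ℝ => ((s' : ℝ), c)) ((1:ℝ), (0:ℝ)) s :=
    (hasDerivAt_id s).prodMk (hasDerivAt_const s c)
  simpa [Function.comp_def] using h.hasFDerivAt.comp_hasDerivAt s h1

lemma hasDerivAt_slice2 {F : ℝ × ℝ → ℝ} {s c : ℝ} (h : DifferentiableAt ℝ F (s, c)) :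
    HasDerivAt (fun c' => F (s, c')) (fderiv ℝ F (s, c) (0, 1)) c := by
  have h1 : HasDerivAt (fun c' : ℝ => ((s : ℝ), c')) ((0:ℝ), (1:ℝ)) c :=
    (hasDerivAt_const c s).prodMk (hasDerivAt_id c)
  simpa [Function.comp_def] using h.hasFDerivAt.comp_hasDerivAt c h1

lemma analyticOnNhd_pd {F : ℝ × ℝ → ℝ} {U : Set (ℝ × ℝ)} (hU : IsOpen U)
    (h : AnalyticOnNhd ℝ F U) :
    AnalyticOnNhd ℝ (fun p => fderiv ℝ F p (1, 0)) U := by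
  intro x hx
  exact ((ContinuousLinearMap.apply ℝ ℝ ((1:ℝ),(0:ℝ))).analyticAt _).comp
    ((h.fderiv_of_isOpen hU) x hx)


/-- The free boundary function: with `Φ(s,c) = (g(s,c) - s ∂ₛg(s,c))/(s-1)`
(extended by continuity to `s = 1`), one has `Φ(1,c̄) = 0` and
`∂ₛΦ(1,c̄) = θ(θ-1) ≠ 0`; hence the implicit function theorem yields an
analytic `H` with `H(c̄) = 1`, `H'(c̄) = 2θ/(1-θ)`, and `Φ(H(c),c) = 0` near `c̄`. -/
theorem free_boundary_implicit_function
    (θ δ σ : ℝ) (hθ : θ ∈ Ioo (0:ℝ) 1) (hδ : 0 < δ) (hσ : 0 < σ)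
    (cbar : ℝ) (hcbar : cbar = (1 - θ) / θ)
    (ε : ℝ) (hε : 0 < ε)
    (g : ℝ × ℝ → ℝ) (hg : AnalyticOnNhd ℝ g (ball ((1:ℝ), cbar) ε))
    (hode : ∀ p ∈ ball ((1:ℝ), cbar) ε,
      deriv (deriv (fun s => g (s, p.2))) p.1
        = 2 * (deriv (fun s => g (s, p.2)) p.1) ^ 2 / (p.2 + g p)
          - 2 * θ * deriv (fun s => g (s, p.2)) p.1 / p.1
          + 2 * δ / σ ^ 2 * (1 + g p / p.2)
              * (g p / p.1 ^ 2 - deriv (fun s => g (s, p.2)) p.1 / p.1))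
    (hinit : ∀ c : ℝ, ((1:ℝ), c) ∈ ball ((1:ℝ), cbar) ε →
      g (1, c) = 1 ∧ deriv (fun s => g (s, c)) 1 = 1)
    (Φ : ℝ → ℝ → ℝ)
    (hΦ : ∀ s c : ℝ, (s, c) ∈ ball ((1:ℝ), cbar) ε → s ≠ 1 →
      Φ s c = (g (s, c) - s * deriv (fun s' => g (s', c)) s) / (s - 1))
    (hΦcont : ∀ c : ℝ, ((1:ℝ), c) ∈ ball ((1:ℝ), cbar) ε →
      ContinuousAt (fun s => Φ s c) 1) :
    Φ 1 cbar = 0 ∧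
    deriv (fun s => Φ s cbar) 1 = θ * (θ - 1) ∧ θ * (θ - 1) ≠ 0 ∧
    ∃ H : ℝ → ℝ, AnalyticAt ℝ H cbar ∧ H cbar = 1 ∧
      deriv H cbar = 2 * θ / (1 - θ) ∧
      ∀ᶠ c in nhds cbar, Φ (H c) c = 0 := by
  obtain ⟨hθ0, hθ1⟩ := hθ
  have hθne : θ ≠ 0 := ne_of_gt hθ0
  have h1θ : 0 < 1 - θ := by linarith
  have hcbarpos : 0 < cbar := by rw [hcbar]; positivity
  have hcbarne : cbar ≠ 0 := ne_of_gt hcbarpos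
  have hcb1 : 1 + cbar = 1/θ := by rw [hcbar]; field_simp; ring
  have hcb1pos : 0 < 1 + cbar := by linarith
  have hcb1ne : 1 + cbar ≠ 0 := ne_of_gt hcb1pos
  set D : Set (ℝ × ℝ) := ball ((1:ℝ), cbar) ε with hD
  have hDopen : IsOpen D := isOpen_ball
  have hx₀ : ((1:ℝ), cbar) ∈ D := mem_ball_self hε
  have hmem : ∀ s c : ℝ, (s, c) ∈ D ↔ |s - 1| < ε ∧ |c - cbar| < ε := by
    intro s c
    rw [hD, mem_ball, Prod.dist_eq, max_lt_iff, Real.dist_eq, Real.dist_eq]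
  -- partial derivatives
  set G : ℝ × ℝ → ℝ := fun p => fderiv ℝ g p (1, 0) with hGdef
  have hGan : AnalyticOnNhd ℝ G D := analyticOnNhd_pd hDopen hg
  set G2 : ℝ × ℝ → ℝ := fun p => fderiv ℝ G p (1, 0) with hG2def
  have hG2an : AnalyticOnNhd ℝ G2 D := analyticOnNhd_pd hDopen hGan
  have hgd : ∀ s c : ℝ, (s, c) ∈ D → HasDerivAt (fun s' => g (s', c)) (G (s, c)) s :=
    fun s c h => hasDerivAt_slice1 ((hg _ h).differentiableAt)
  have hGd : ∀ s c : ℝ, (s, c) ∈ D → HasDerivAt (fun s' => G (s', c)) (G2 (s, c)) s :=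
    fun s c h => hasDerivAt_slice1 ((hGan _ h).differentiableAt)
  have hderiv1 : ∀ s c : ℝ, (s, c) ∈ D → deriv (fun s' => g (s', c)) s = G (s, c) :=
    fun s c h => (hgd s c h).deriv
  have hEopen : ∀ c : ℝ, IsOpen {s : ℝ | (s, c) ∈ D} := by
    intro c
    exact hDopen.preimage (Continuous.prodMk continuous_id continuous_const)
  have hderiv2 : ∀ s c : ℝ, (s, c) ∈ D → deriv (deriv (fun s' => g (s', c))) s = G2 (s, c) := by
    intro s c h
    have hev : deriv (fun s' => g (s', c)) =ᶠ[nhds s] fun s' => G (s', c) := by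
      filter_upwards [(hEopen c).mem_nhds h] with s' hs' using hderiv1 s' c hs'
    rw [hev.deriv_eq]
    exact (hGd s c h).deriv
  have hode2 : ∀ p ∈ D, G2 p = 2 * (G p) ^ 2 / (p.2 + g p) - 2 * θ * G p / p.1
      + 2 * δ / σ ^ 2 * (1 + g p / p.2) * (g p / p.1 ^ 2 - G p / p.1) := by
    intro p hp
    have h0 := hode p hp
    have e1 : (p.1, p.2) = p := rfl
    rw [show deriv (deriv (fun s => g (s, p.2))) p.1 = G2 p from by
        rw [hderiv2 p.1 p.2 (by rw [e1]; exact hp)]] at h0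
    rw [show deriv (fun s => g (s, p.2)) p.1 = G p from by
        rw [hderiv1 p.1 p.2 (by rw [e1]; exact hp)]] at h0
    exact h0
  have hg1 : ∀ c : ℝ, ((1:ℝ), c) ∈ D → g (1, c) = 1 := fun c h => (hinit c h).1
  have hG1 : ∀ c : ℝ, ((1:ℝ), c) ∈ D → G (1, c) = 1 := by
    intro c h
    have := (hinit c h).2
    rwa [hderiv1 1 c h] at this
  have hG21 : ∀ c : ℝ, ((1:ℝ), c) ∈ D → G2 (1, c) = 2 / (c + 1) - 2 * θ := by
    intro c h
    have h2 := hode2 (1, c) h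
    rw [hg1 c h, hG1 c h] at h2
    norm_num at h2
    rw [h2]
  set N : ℝ × ℝ → ℝ := fun p => g p - p.1 * G p with hNdef
  set Ns : ℝ × ℝ → ℝ := fun p => -(p.1 * G2 p) with hNsdef
  have hNsan : AnalyticOnNhd ℝ Ns D := by
    intro x hx
    exact (analyticAt_fst.mul (hG2an x hx)).neg
  have hNscont : ContinuousOn Ns D := hNsan.continuousOn
  have hNsd : ∀ s c : ℝ, (s, c) ∈ D → HasDerivAt (fun s' => N (s', c)) (Ns (s, c)) s := by
    intro s c h
    have h1 : HasDerivAt (fun s' : ℝ => s' * G (s', c)) (1 * G (s, c) + s * G2 (s, c)) s :=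
      (hasDerivAt_id s).mul (hGd s c h)
    have h2 := (hgd s c h).sub h1
    have : G (s, c) - (1 * G (s, c) + s * G2 (s, c)) = Ns (s, c) := by
      simp [hNsdef]
    rwa [this] at h2
  have hN1 : ∀ c : ℝ, ((1:ℝ), c) ∈ D → N (1, c) = 0 := by
    intro c h
    simp [hNdef, hg1 c h, hG1 c h]
  set Ψ : ℝ × ℝ → ℝ := fun p => ∫ t in (0:ℝ)..1, Ns (1 + t * (p.1 - 1), p.2) with hΨdef
  have hΨan : AnalyticAt ℝ Ψ (1, cbar) := by
    have := analyticAt_slice_integral (F := Ns) (x₀ := ((1:ℝ), cbar)) (hNsan _ hx₀)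
    exact this
  -- factorization N = (s-1) Ψ on D
  have hseg : ∀ s c : ℝ, (s, c) ∈ D → ∀ t ∈ uIcc (0:ℝ) 1, (1 + t * (s - 1), c) ∈ D := by
    intro s c h t ht
    rw [uIcc_of_le (zero_le_one)] at ht
    rw [hmem] at h ⊢
    refine ⟨?_, h.2⟩
    have : |1 + t * (s - 1) - 1| = |t| * |s - 1| := by
      rw [add_sub_cancel_left, abs_mul]
    rw [this]
    calc |t| * |s - 1| ≤ 1 * |s - 1| := by
          refine mul_le_mul_of_nonneg_right ?_ (abs_nonneg _)
          rw [abs_of_nonneg ht.1]; exact ht.2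
    _ = |s - 1| := one_mul _
    _ < ε := h.1
  have hfact : ∀ s c : ℝ, (s, c) ∈ D → N (s, c) = (s - 1) * Ψ (s, c) := by
    intro s c h
    have h1c : ((1:ℝ), c) ∈ D := by
      rw [hmem] at h ⊢; exact ⟨by simpa using hε, h.2⟩
    have hderiv : ∀ t ∈ uIcc (0:ℝ) 1,
        HasDerivAt (fun t : ℝ => N (1 + t * (s - 1), c))
          ((s - 1) * Ns (1 + t * (s - 1), c)) t := by
      intro t ht
      have h1 : HasDerivAt (fun t : ℝ => 1 + t * (s - 1)) (s - 1) t := by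
        simpa using ((hasDerivAt_id t).mul_const (s - 1)).const_add 1
      have h2 := (hNsd _ _ (hseg s c h t ht)).comp t h1
      simpa [mul_comm, Function.comp_def] using h2
    have hcont : ContinuousOn (fun t : ℝ => (s - 1) * Ns (1 + t * (s - 1), c)) (uIcc (0:ℝ) 1) := by
      refine ContinuousOn.mul continuousOn_const ?_
      refine hNscont.comp ?_ ?_
      · exact (Continuous.prodMk (continuous_const.add (continuous_id.mul continuous_const))
          continuous_const).continuousOn
      · intro t ht
        exact hseg s c h t ht
    have hFTC := intervalIntegral.integral_eq_sub_of_hasDerivAt hderiv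
      (hcont.intervalIntegrable)
    have e2 : (1:ℝ) + 1 * (s - 1) = s := by ring
    have e3 : (1:ℝ) + 0 * (s - 1) = 1 := by ring
    rw [intervalIntegral.integral_const_mul, e2, e3, hN1 c h1c, sub_zero] at hFTC
    rw [← hFTC]
  have hΨ1 : ∀ c : ℝ, ((1:ℝ), c) ∈ D → Ψ (1, c) = 2 * θ - 2 / (c + 1) := by
    intro c h
    have e0 : ∀ t : ℝ, Ns (1 + t * (((1:ℝ), c).1 - 1), ((1:ℝ), c).2) = Ns (1, c) := by
      intro t; norm_num
    have e1 : Ψ (1, c) = ∫ t in (0:ℝ)..1, Ns (1, c) :=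
      intervalIntegral.integral_congr (fun t _ => e0 t)
    rw [e1, intervalIntegral.integral_const, smul_eq_mul]
    have e2 : Ns (1, c) = -(1 * G2 (1, c)) := rfl
    rw [e2, hG21 c h]
    ring
  have hΨ0 : Ψ (1, cbar) = 0 := by
    rw [hΨ1 cbar hx₀, show cbar + 1 = 1/θ from by rw [add_comm]; exact hcb1]
    field_simp; ring
  -- slices along c = cbar
  set u : ℝ → ℝ := fun s => g (s, cbar) with hudef
  set v : ℝ → ℝ := fun s => G (s, cbar) with hvdef
  set w : ℝ → ℝ := fun s => G2 (s, cbar) with hwdef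
  have hu1 : u 1 = 1 := hg1 cbar hx₀
  have hv1 : v 1 = 1 := hG1 cbar hx₀
  have hw1 : w 1 = 0 := by
    show G2 (1, cbar) = 0
    rw [hG21 cbar hx₀, show cbar + 1 = 1/θ from by rw [add_comm]; exact hcb1]
    field_simp; ring
  have hud : ∀ s : ℝ, (s, cbar) ∈ D → HasDerivAt u (v s) s := fun s h => hgd s cbar h
  have hvd : ∀ s : ℝ, (s, cbar) ∈ D → HasDerivAt v (w s) s := fun s h => hGd s cbar h
  set K : ℝ := 2 * δ / σ ^ 2 with hKdef
  -- derivative of the ODE right-hand side at s = 1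
  have hcbu : cbar + u 1 ≠ 0 := by rw [hu1, add_comm]; exact hcb1ne
  have hRd : HasDerivAt (fun s : ℝ => 2 * (v s) ^ 2 / (cbar + u s) - 2 * θ * v s / s
      + K * (1 + u s / cbar) * (u s / s ^ 2 - v s / s))
      (((2 * (2 * v 1 ^ 1 * w 1)) * (cbar + u 1) - 2 * (v 1) ^ 2 * (v 1)) / (cbar + u 1) ^ 2
        - (2 * θ * w 1 * 1 - 2 * θ * v 1 * 1) / (1 : ℝ) ^ 2
        + (K * (v 1 / cbar) * (u 1 / 1 ^ 2 - v 1 / 1)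
            + K * (1 + u 1 / cbar) * ((v 1 * 1 ^ 2 - u 1 * (2 * 1 ^ 1)) / ((1 : ℝ) ^ 2) ^ 2
              - (w 1 * 1 - v 1 * 1) / (1 : ℝ) ^ 2))) 1 := by
    have hA : HasDerivAt (fun s : ℝ => 2 * (v s) ^ 2 / (cbar + u s))
        (((2 * (2 * v 1 ^ 1 * w 1)) * (cbar + u 1) - 2 * (v 1) ^ 2 * (v 1)) / (cbar + u 1) ^ 2)
        1 := by
      exact (((hvd 1 hx₀).pow 2).const_mul 2).div ((hud 1 hx₀).const_add cbar) hcbu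
    have hB : HasDerivAt (fun s : ℝ => 2 * θ * v s / s)
        ((2 * θ * w 1 * 1 - 2 * θ * v 1 * 1) / (1 : ℝ) ^ 2) 1 :=
      ((hvd 1 hx₀).const_mul (2 * θ)).div (hasDerivAt_id 1) one_ne_zero
    have hC : HasDerivAt (fun s : ℝ => K * (1 + u s / cbar) * (u s / s ^ 2 - v s / s))
        (K * (v 1 / cbar) * (u 1 / 1 ^ 2 - v 1 / 1)
          + K * (1 + u 1 / cbar) * ((v 1 * 1 ^ 2 - u 1 * (2 * 1 ^ 1)) / ((1 : ℝ) ^ 2) ^ 2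
            - (w 1 * 1 - v 1 * 1) / (1 : ℝ) ^ 2)) 1 := by
      have hC1 : HasDerivAt (fun s : ℝ => K * (1 + u s / cbar)) (K * (v 1 / cbar)) 1 :=
        (((hud 1 hx₀).div_const cbar).const_add 1).const_mul K
      have hC2 : HasDerivAt (fun s : ℝ => u s / s ^ 2)
          ((v 1 * 1 ^ 2 - u 1 * (2 * 1 ^ 1)) / ((1 : ℝ) ^ 2) ^ 2) 1 :=
        (hud 1 hx₀).div (hasDerivAt_pow 2 1) (by norm_num)
      have hC3 : HasDerivAt (fun s : ℝ => v s / s)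
          ((w 1 * 1 - v 1 * 1) / (1 : ℝ) ^ 2) 1 :=
        (hvd 1 hx₀).div (hasDerivAt_id 1) one_ne_zero
      exact hC1.mul (hC2.sub hC3)
    exact (hA.sub hB).add hC
  have hwD : HasDerivAt w (2 * θ - 2 * θ ^ 2) 1 := by
    have hwev : w =ᶠ[nhds 1] (fun s : ℝ => 2 * (v s) ^ 2 / (cbar + u s) - 2 * θ * v s / s
        + K * (1 + u s / cbar) * (u s / s ^ 2 - v s / s)) := by
      filter_upwards [(hEopen cbar).mem_nhds hx₀] with s hs
      exact hode2 (s, cbar) hs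
    have h := hRd.congr_of_eventuallyEq hwev
    have e : ((2 * (2 * v 1 ^ 1 * w 1)) * (cbar + u 1) - 2 * (v 1) ^ 2 * (v 1)) / (cbar + u 1) ^ 2
        - (2 * θ * w 1 * 1 - 2 * θ * v 1 * 1) / (1 : ℝ) ^ 2
        + (K * (v 1 / cbar) * (u 1 / 1 ^ 2 - v 1 / 1)
            + K * (1 + u 1 / cbar) * ((v 1 * 1 ^ 2 - u 1 * (2 * 1 ^ 1)) / ((1 : ℝ) ^ 2) ^ 2
              - (w 1 * 1 - v 1 * 1) / (1 : ℝ) ^ 2)) = 2 * θ - 2 * θ ^ 2 := by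
      rw [hu1, hv1, hw1, show cbar + 1 = 1/θ from by rw [add_comm]; exact hcb1]
      field_simp
      ring
    rwa [e] at h
  -- the slice ψ of Ψ along c = cbar
  set ψ : ℝ → ℝ := fun s => Ψ (s, cbar) with hψdef
  have hψan : AnalyticAt ℝ ψ 1 := by
    have hcurve : AnalyticAt ℝ (fun s : ℝ => ((s : ℝ), cbar)) 1 :=
      analyticAt_id.prod analyticAt_const
    have h := AnalyticAt.comp (g := Ψ) (f := fun s : ℝ => ((s : ℝ), cbar)) hΨan hcurve
    exact h
  obtain ⟨pψ, rψ, hψball⟩ := hψan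
  have hψOn : AnalyticOnNhd ℝ ψ (EMetric.ball (1:ℝ) rψ) := hψball.analyticOnNhd
  have hψdOn : AnalyticOnNhd ℝ (deriv ψ) (EMetric.ball (1:ℝ) rψ) := hψOn.deriv
  have hballmem : (1:ℝ) ∈ EMetric.ball (1:ℝ) rψ := EMetric.mem_ball_self hψball.r_pos
  have hballopen : IsOpen (EMetric.ball (1:ℝ) rψ) := EMetric.isOpen_ball
  have hψan' : AnalyticAt ℝ ψ 1 := hψOn 1 hballmem
  have hkey : (fun s : ℝ => Ns (s, cbar)) =ᶠ[nhds 1]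
      (fun s : ℝ => ψ s + (s - 1) * deriv ψ s) := by
    have hset : {s : ℝ | (s, cbar) ∈ D} ∩ EMetric.ball (1:ℝ) rψ ∈ nhds (1:ℝ) :=
      Filter.inter_mem ((hEopen cbar).mem_nhds hx₀) (hballopen.mem_nhds hballmem)
    filter_upwards [hset] with s hs
    obtain ⟨hs1, hs2⟩ := hs
    have h₁ : HasDerivAt (fun s' : ℝ => (s' - 1) * ψ s') (Ns (s, cbar)) s := by
      refine (hNsd s cbar hs1).congr_of_eventuallyEq ?_
      filter_upwards [(hEopen cbar).mem_nhds hs1] with s' hs'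
      exact (hfact s' cbar hs').symm
    have h₂ : HasDerivAt (fun s' : ℝ => (s' - 1) * ψ s')
        (1 * ψ s + (s - 1) * deriv ψ s) s :=
      ((hasDerivAt_id s).sub_const 1).mul ((hψOn s hs2).differentiableAt.hasDerivAt)
    have h3 := h₁.unique h₂
    rw [h3]; ring
  have hNsD : HasDerivAt (fun s : ℝ => Ns (s, cbar))
      (-(1 * w 1 + 1 * (2 * θ - 2 * θ ^ 2))) 1 := by
    have h1 : HasDerivAt (fun s : ℝ => s * w s) (1 * w 1 + 1 * (2 * θ - 2 * θ ^ 2)) 1 :=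
      (hasDerivAt_id 1).mul hwD
    exact h1.neg
  have hψ'A : HasDerivAt (fun s : ℝ => ψ s + (s - 1) * deriv ψ s)
      (deriv ψ 1 + (1 * deriv ψ 1 + (1 - 1) * deriv (deriv ψ) 1)) 1 := by
    have d1 : HasDerivAt ψ (deriv ψ 1) 1 := hψan'.differentiableAt.hasDerivAt
    have d2 : HasDerivAt (deriv ψ) (deriv (deriv ψ) 1) 1 :=
      (hψdOn 1 hballmem).differentiableAt.hasDerivAt
    exact d1.add (((hasDerivAt_id 1).sub_const 1).mul d2)
  have hψ'1 : deriv ψ 1 = θ * (θ - 1) := by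
    have heq := hNsD.unique (hψ'A.congr_of_eventuallyEq hkey)
    rw [hw1] at heq
    norm_num at heq
    have h9 : deriv ψ 1 = θ ^ 2 - θ := by linarith
    rw [h9]; ring
  -- Φ along c = cbar
  have hΦψ : (fun s => Φ s cbar) =ᶠ[nhdsWithin (1:ℝ) {(1:ℝ)}ᶜ] ψ := by
    have hset : {s : ℝ | (s, cbar) ∈ D} ∈ nhds (1:ℝ) := (hEopen cbar).mem_nhds hx₀
    filter_upwards [mem_nhdsWithin_of_mem_nhds hset, self_mem_nhdsWithin] with s hs hne0
    have hne : s ≠ 1 := hne0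
    rw [hΦ s cbar hs hne, hderiv1 s cbar hs]
    have hne' : s - 1 ≠ 0 := sub_ne_zero.2 hne
    rw [show g (s, cbar) - s * G (s, cbar) = N (s, cbar) from rfl, hfact s cbar hs,
      mul_comm, mul_div_assoc, div_self hne', mul_one]
  have hψcont : ContinuousAt ψ 1 := hψan'.continuousAt
  have hΦ1ψ : Φ 1 cbar = ψ 1 := by
    have t1 : Tendsto (fun s => Φ s cbar) (nhdsWithin (1:ℝ) {(1:ℝ)}ᶜ) (nhds (Φ 1 cbar)) :=
      (hΦcont cbar hx₀).tendsto.mono_left nhdsWithin_le_nhds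
    have t2 : Tendsto (fun s => Φ s cbar) (nhdsWithin (1:ℝ) {(1:ℝ)}ᶜ) (nhds (ψ 1)) :=
      Tendsto.congr' hΦψ.symm (hψcont.tendsto.mono_left nhdsWithin_le_nhds)
    exact tendsto_nhds_unique t1 t2
  have hψ10 : ψ 1 = 0 := hΨ0
  have goal1 : Φ 1 cbar = 0 := by rw [hΦ1ψ]; exact hψ10
  have hΦev : (fun s => Φ s cbar) =ᶠ[nhds (1:ℝ)] ψ := by
    have h' := eventually_nhdsWithin_iff.1 hΦψ
    filter_upwards [h'] with s hs
    by_cases h1 : s = 1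
    · subst h1; rw [goal1, hψ10]
    · exact hs h1
  have goal2 : deriv (fun s => Φ s cbar) 1 = θ * (θ - 1) := by
    rw [hΦev.deriv_eq]; exact hψ'1
  have goal3 : θ * (θ - 1) ≠ 0 := by
    intro h
    rcases mul_eq_zero.1 h with h | h
    · exact hθne h
    · linarith
  -- the two partial derivatives of Ψ at (1, cbar)
  have hΨdiff : DifferentiableAt ℝ Ψ (1, cbar) := hΨan.differentiableAt
  have hEopen2 : IsOpen {c : ℝ | ((1:ℝ), c) ∈ D} :=
    hDopen.preimage (Continuous.prodMk continuous_const continuous_id)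
  have ha : fderiv ℝ Ψ (1, cbar) (1, 0) = θ * (θ - 1) := by
    have h1 : HasDerivAt (fun s' => Ψ (s', cbar)) (fderiv ℝ Ψ (1, cbar) (1, 0)) 1 :=
      hasDerivAt_slice1 hΨdiff
    rw [← h1.deriv]
    exact hψ'1
  have hb : fderiv ℝ Ψ (1, cbar) (0, 1) = 2 * θ ^ 2 := by
    have h1 : HasDerivAt (fun c => Ψ (1, c)) (fderiv ℝ Ψ (1, cbar) (0, 1)) cbar :=
      hasDerivAt_slice2 hΨdiff
    have hd : HasDerivAt (fun c : ℝ => c + 1) 1 cbar := (hasDerivAt_id cbar).add_const 1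
    have hq : HasDerivAt (fun c : ℝ => 2 / (c + 1))
        ((0 * (cbar + 1) - 2 * 1) / (cbar + 1) ^ 2) cbar :=
      (hasDerivAt_const cbar 2).div hd (by rw [add_comm]; exact hcb1ne)
    have h2 : HasDerivAt (fun c : ℝ => 2 * θ - 2 / (c + 1))
        (0 - (0 * (cbar + 1) - 2 * 1) / (cbar + 1) ^ 2) cbar :=
      (hasDerivAt_const cbar (2 * θ)).sub hq
    have h3 : HasDerivAt (fun c => Ψ (1, c))
        (0 - (0 * (cbar + 1) - 2 * 1) / (cbar + 1) ^ 2) cbar := by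
      refine h2.congr_of_eventuallyEq ?_
      filter_upwards [hEopen2.mem_nhds hx₀] with c hc
      exact hΨ1 c hc
    have h4 := h1.unique h3
    rw [h4, show cbar + 1 = 1/θ from by rw [add_comm]; exact hcb1]
    field_simp; ring
  -- implicit function theorem
  have hθ1ne : θ - 1 ≠ 0 := by intro h; linarith
  set A : (ℝ × ℝ) →L[ℝ] ℝ := fderiv ℝ Ψ (1, cbar) with hAdef
  have hAz : ∀ z : ℝ × ℝ, A z = z.1 * (θ * (θ - 1)) + z.2 * (2 * θ ^ 2) := by
    intro z
    have hz : z = z.1 • (((1:ℝ), (0:ℝ)) : ℝ × ℝ) + z.2 • (((0:ℝ), (1:ℝ)) : ℝ × ℝ) := by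
      apply Prod.ext <;> simp
    calc A z = A (z.1 • (((1:ℝ), (0:ℝ)) : ℝ × ℝ) + z.2 • (((0:ℝ), (1:ℝ)) : ℝ × ℝ)) := by
          rw [← hz]
    _ = z.1 * A ((1:ℝ), (0:ℝ)) + z.2 * A ((0:ℝ), (1:ℝ)) := by
        rw [map_add, A.map_smul, A.map_smul, smul_eq_mul, smul_eq_mul]
    _ = z.1 * (θ * (θ - 1)) + z.2 * (2 * θ ^ 2) := by rw [ha, hb]
  set Wm : ℝ × ℝ → ℝ × ℝ := fun p => (Ψ p, p.2) with hWmdef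
  have hWan : AnalyticAt ℝ Wm (1, cbar) := hΨan.prod analyticAt_snd
  set Fl : (ℝ × ℝ) →L[ℝ] (ℝ × ℝ) := A.prod (ContinuousLinearMap.snd ℝ ℝ ℝ) with hFldef
  set Bl : (ℝ × ℝ) →L[ℝ] (ℝ × ℝ) :=
    ((θ * (θ - 1))⁻¹ • (ContinuousLinearMap.fst ℝ ℝ ℝ
      - (2 * θ ^ 2) • ContinuousLinearMap.snd ℝ ℝ ℝ)).prod
      (ContinuousLinearMap.snd ℝ ℝ ℝ) with hBldef
  have hBF : Function.LeftInverse Bl Fl := by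
    intro z
    have h1 : Fl z = (A z, z.2) := rfl
    have h2 : Bl (A z, z.2) = ((θ * (θ - 1))⁻¹ * (A z - (2 * θ ^ 2) * z.2), z.2) := rfl
    rw [h1, h2, hAz]
    apply Prod.ext
    · show (θ * (θ - 1))⁻¹ * (z.1 * (θ * (θ - 1)) + z.2 * (2 * θ ^ 2) - 2 * θ ^ 2 * z.2) = z.1
      field_simp
      ring
    · rfl
  have hFB : Function.RightInverse Bl Fl := by
    intro z
    have h1 : Bl z = ((θ * (θ - 1))⁻¹ * (z.1 - (2 * θ ^ 2) * z.2), z.2) := rfl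
    have h2 : Fl ((θ * (θ - 1))⁻¹ * (z.1 - (2 * θ ^ 2) * z.2), z.2)
        = (A ((θ * (θ - 1))⁻¹ * (z.1 - (2 * θ ^ 2) * z.2), z.2), z.2) := rfl
    rw [h1, h2, hAz]
    apply Prod.ext
    · show ((θ * (θ - 1))⁻¹ * (z.1 - 2 * θ ^ 2 * z.2)) * (θ * (θ - 1)) + z.2 * (2 * θ ^ 2) = z.1
      field_simp
      ring
    · rfl
  set iE : (ℝ × ℝ) ≃L[ℝ] (ℝ × ℝ) := ContinuousLinearEquiv.equivOfInverse Fl Bl hBF hFB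
    with hiEdef
  have hWf : HasFDerivAt Wm Fl (1, cbar) := hΨdiff.hasFDerivAt.prodMk hasFDerivAt_snd
  have h2' : fderiv ℝ Wm (1, cbar) = (↑iE : (ℝ × ℝ) →L[ℝ] (ℝ × ℝ)) := by
    rw [hWf.fderiv]; rfl
  have hWsf : HasStrictFDerivAt Wm (↑iE : (ℝ × ℝ) →L[ℝ] (ℝ × ℝ)) (1, cbar) := by
    have h1 := hWan.hasStrictFDerivAt
    rwa [h2'] at h1
  set fph := hWsf.toOpenPartialHomeomorph Wm with hfphdef
  have hfsource : ((1:ℝ), cbar) ∈ fph.source := hWsf.mem_toOpenPartialHomeomorph_source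
  have hfcoe : ⇑fph = Wm := hWsf.toOpenPartialHomeomorph_coe
  have hW0 : Wm ((1:ℝ), cbar) = ((0:ℝ), cbar) := by
    show (Ψ (1, cbar), cbar) = ((0:ℝ), cbar)
    rw [hΨ0]
  have hfat : fph ((1:ℝ), cbar) = ((0:ℝ), cbar) := by rw [hfcoe]; exact hW0
  have hsymm_an : AnalyticAt ℝ fph.symm ((0:ℝ), cbar) := by
    have h := fph.analyticAt_symm' (i := iE) hfsource
      (by rw [hfcoe]; exact hWan) (by rw [hfcoe]; exact h2')
    rwa [hfat] at h
  set H : ℝ → ℝ := fun c => (fph.symm ((0:ℝ), c)).1 with hHdef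
  have hcurve2 : AnalyticAt ℝ (fun c : ℝ => (((0:ℝ), c) : ℝ × ℝ)) cbar :=
    analyticAt_const.prod analyticAt_id
  have hHan : AnalyticAt ℝ H cbar := by
    have h1 := AnalyticAt.comp (g := fph.symm)
      (f := fun c : ℝ => (((0:ℝ), c) : ℝ × ℝ)) hsymm_an hcurve2
    have h2 := AnalyticAt.comp (g := fun p : ℝ × ℝ => p.1)
      (f := fun c => fph.symm ((0:ℝ), c)) analyticAt_fst h1
    exact h2
  have hsymm0 : fph.symm ((0:ℝ), cbar) = ((1:ℝ), cbar) := by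
    rw [← hfat]; exact fph.left_inv hfsource
  have hH1 : H cbar = 1 := by
    show (fph.symm ((0:ℝ), cbar)).1 = 1
    rw [hsymm0]
  have htarget : ∀ᶠ c in nhds cbar, (((0:ℝ), c) : ℝ × ℝ) ∈ fph.target := by
    have hmemtar : fph.target ∈ nhds (((0:ℝ), cbar) : ℝ × ℝ) := by
      apply fph.open_target.mem_nhds
      rw [← hfat]; exact fph.map_source hfsource
    have hcont2 : ContinuousAt (fun c : ℝ => (((0:ℝ), c) : ℝ × ℝ)) cbar :=
      (continuous_const.prodMk continuous_id).continuousAt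
    exact hcont2.preimage_mem_nhds hmemtar
  have hΨH : ∀ᶠ c in nhds cbar, Ψ (H c, c) = 0 := by
    filter_upwards [htarget] with c hc
    have h1 : Wm (fph.symm ((0:ℝ), c)) = ((0:ℝ), c) := by
      rw [← hfcoe]; exact fph.right_inv hc
    have hpsi0 : Ψ (fph.symm ((0:ℝ), c)) = 0 := congrArg Prod.fst h1
    have h3 : (fph.symm ((0:ℝ), c)).2 = c := congrArg Prod.snd h1
    have h4 : ((H c, c) : ℝ × ℝ) = fph.symm ((0:ℝ), c) := by
      apply Prod.ext
      · rfl
      · exact h3.symm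
    rw [h4]; exact hpsi0
  have hHd : HasDerivAt H (deriv H cbar) cbar := hHan.differentiableAt.hasDerivAt
  have hcurve3 : HasDerivAt (fun c : ℝ => ((H c, c) : ℝ × ℝ)) ((deriv H cbar, 1)) cbar :=
    hHd.prodMk (hasDerivAt_id cbar)
  have hΨcomp : HasDerivAt (fun c : ℝ => Ψ (H c, c)) (A (deriv H cbar, 1)) cbar := by
    have he : ((H cbar, cbar) : ℝ × ℝ) = ((1:ℝ), cbar) := by rw [hH1]
    have hfd : HasFDerivAt Ψ A ((H cbar, cbar) : ℝ × ℝ) := by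
      rw [he]; exact hΨdiff.hasFDerivAt
    exact HasFDerivAt.comp_hasDerivAt (f := fun c : ℝ => ((H c, c) : ℝ × ℝ)) cbar hfd hcurve3
  have hzero : HasDerivAt (fun c : ℝ => Ψ (H c, c)) 0 cbar := by
    refine (hasDerivAt_const cbar 0).congr_of_eventuallyEq ?_
    filter_upwards [hΨH] with c hc using hc
  have hlin := hΨcomp.unique hzero
  have hlin2 : deriv H cbar * (θ * (θ - 1)) + 1 * (2 * θ ^ 2) = 0 := by
    rw [hAz] at hlin; exact hlin
  have hHd' : deriv H cbar = 2 * θ / (1 - θ) := by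
    have h5 : θ * (deriv H cbar * (θ - 1) + 2 * θ) = 0 := by linear_combination hlin2
    have h6 := (mul_eq_zero.1 h5).resolve_left hθne
    rw [eq_div_iff (ne_of_gt h1θ)]
    linear_combination -h6
  have hmne : (2 * θ / (1 - θ)) ≠ 0 := by positivity
  have hslope : Tendsto (slope H cbar) (nhdsWithin cbar {cbar}ᶜ) (nhds (2 * θ / (1 - θ))) := by
    rw [← hHd']
    exact hasDerivAt_iff_tendsto_slope.1 hHd
  have hne1 : ∀ᶠ c in nhdsWithin cbar {cbar}ᶜ, H c ≠ 1 := by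
    have h0 : {x : ℝ | x ≠ 0} ∈ nhds (2 * θ / (1 - θ)) := isOpen_ne.mem_nhds hmne
    filter_upwards [hslope.eventually h0] with c hc
    intro hH1c
    apply hc
    show slope H cbar c = 0
    rw [slope_def_field, hH1c, hH1]
    simp
  have hHD : ∀ᶠ c in nhds cbar, ((H c, c) : ℝ × ℝ) ∈ D := by
    have hcont3 : ContinuousAt (fun c : ℝ => ((H c, c) : ℝ × ℝ)) cbar :=
      hHan.continuousAt.prodMk continuousAt_id
    have he : ((H cbar, cbar) : ℝ × ℝ) = ((1:ℝ), cbar) := by rw [hH1]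
    apply hcont3.preimage_mem_nhds
    rw [he]
    exact hDopen.mem_nhds hx₀
  have goal4 : ∀ᶠ c in nhds cbar, Φ (H c) c = 0 := by
    filter_upwards [hΨH, hHD, eventually_nhdsWithin_iff.1 hne1] with c h1 h2 h3
    by_cases hc : c = cbar
    · subst hc
      rw [hH1]; exact goal1
    · have hHne : H c ≠ 1 := h3 hc
      rw [hΦ (H c) c h2 hHne, hderiv1 (H c) c h2]
      rw [show g (H c, c) - H c * G (H c, c) = N (H c, c) from rfl, hfact (H c) c h2, h1]
      simp
  exact ⟨goal1, goal2, goal3, H, hHan, hH1, hHd', goal4⟩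
end

section
/- With the same expansions of $c$ and $\bar{s}$ as for the lower boundary, one has $\frac{1}{1+c/\bar{s}}=\theta+\left(\frac{3}{4}\theta^2(1-\theta)^2\right)^{1/3}\lambda^{1/3}-\frac{\delta\theta}{6\sigma^2}\left(\frac{6}{\theta(1-\theta)}\right)^{2/3}\lambda^{2/3}+O(\lambda)$, and consequently the width of the no-trade region satisfies $\frac{1}{1+c/\bar{s}}-\frac{1}{1+c}=\left(6\theta^2(1-\theta)^2\right)^{1/3}\lambda^{1/3}+O(\lambda)$, with no $\lambda^{2/3}$ term. -/
open Set Filter Asymptotics Real Topology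

set_option maxHeartbeats 2000000 in
/-- Upper boundary and width of the no-trade region: from the expansions of
`c` and `s̄`,
`1/(1+c/s̄) = θ + (3θ²(1-θ)²/4)^{1/3} λ^{1/3} - (δθ/(6σ²))(6/(θ(1-θ)))^{2/3} λ^{2/3} + O(λ)`,
and the width satisfies
`1/(1+c/s̄) - 1/(1+c) = (6θ²(1-θ)²)^{1/3} λ^{1/3} + O(λ)`
(the `λ^{2/3}` terms cancel). -/
theorem upper_boundary_and_width_expansion
    (θ δ σ cbar α β γ : ℝ) (hθ : θ ∈ Ioo (0:ℝ) 1) (hδ : 0 < δ) (hσ : 0 < σ)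
    (hcbar : cbar = (1 - θ) / θ)
    (hγ : γ = (6 / (θ * (1 - θ))) ^ ((1:ℝ)/3))
    (hα : α = (1 - θ) / (2 * θ) * γ)
    (hβ : β = (2 * δ / σ ^ 2 + 3 * (1 - θ) ^ 2) / (12 * θ) * γ ^ 2)
    (c sbar : ℝ → ℝ)
    (hc : (fun lam : ℝ => c lam
        - (cbar + α * lam ^ ((1:ℝ)/3) + β * lam ^ ((2:ℝ)/3)))
      =O[nhdsWithin 0 (Ioi 0)] (fun lam : ℝ => lam))
    (hs : (fun lam : ℝ => sbar lam
        - (1 + γ * lam ^ ((1:ℝ)/3) + γ ^ 2 / 2 * lam ^ ((2:ℝ)/3)))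
      =O[nhdsWithin 0 (Ioi 0)] (fun lam : ℝ => lam)) :
    ((fun lam : ℝ => 1 / (1 + c lam / sbar lam)
        - (θ + (3 / 4 * θ ^ 2 * (1 - θ) ^ 2) ^ ((1:ℝ)/3) * lam ^ ((1:ℝ)/3)
          - δ * θ / (6 * σ ^ 2) * (6 / (θ * (1 - θ))) ^ ((2:ℝ)/3)
              * lam ^ ((2:ℝ)/3)))
      =O[nhdsWithin 0 (Ioi 0)] (fun lam : ℝ => lam)) ∧
    ((fun lam : ℝ => 1 / (1 + c lam / sbar lam) - 1 / (1 + c lam)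
        - (6 * θ ^ 2 * (1 - θ) ^ 2) ^ ((1:ℝ)/3) * lam ^ ((1:ℝ)/3))
      =O[nhdsWithin 0 (Ioi 0)] (fun lam : ℝ => lam)) := by
  obtain ⟨hθ0, hθ1⟩ := hθ
  have hθ1' : (0:ℝ) < 1 - θ := by linarith
  have hθne : θ ≠ 0 := ne_of_gt hθ0
  have hσne : σ ≠ 0 := ne_of_gt hσ
  have h6pos : (0:ℝ) < 6 / (θ * (1 - θ)) := by positivity
  set l := nhdsWithin (0:ℝ) (Ioi 0) with hl
  set t : ℝ → ℝ := fun lam => lam ^ ((1:ℝ)/3) with ht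
  -- identify the rpow constants
  have hB : (6 / (θ * (1 - θ))) ^ ((2:ℝ)/3) = γ ^ 2 := by
    rw [hγ, ← Real.rpow_natCast ((6 / (θ * (1 - θ))) ^ ((1:ℝ)/3)) 2,
      ← Real.rpow_mul h6pos.le]
    norm_num
  have hA : (3 / 4 * θ ^ 2 * (1 - θ) ^ 2) ^ ((1:ℝ)/3) = θ * (1 - θ) / 2 * γ := by
    have h1 : (3 / 4 * θ ^ 2 * (1 - θ) ^ 2 : ℝ)
        = (θ * (1 - θ) / 2) ^ (3:ℕ) * (6 / (θ * (1 - θ))) := by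
      field_simp; ring
    rw [h1, Real.mul_rpow (by positivity) h6pos.le,
      ← Real.rpow_natCast (θ * (1 - θ) / 2) 3, ← Real.rpow_mul (by positivity), hγ]
    norm_num
  have hA2 : (6 * θ ^ 2 * (1 - θ) ^ 2) ^ ((1:ℝ)/3) = θ * (1 - θ) * γ := by
    have h1 : (6 * θ ^ 2 * (1 - θ) ^ 2 : ℝ)
        = (θ * (1 - θ)) ^ (3:ℕ) * (6 / (θ * (1 - θ))) := by
      field_simp
    rw [h1, Real.mul_rpow (by positivity) h6pos.le,
      ← Real.rpow_natCast (θ * (1 - θ)) 3, ← Real.rpow_mul (by positivity), hγ]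
    norm_num
  rw [hA, hB, hA2]
  -- basic filter facts
  have hmem : ∀ᶠ lam in l, lam ∈ Ioi (0:ℝ) := eventually_mem_nhdsWithin
  have hcube : ∀ᶠ lam in l, (t lam) ^ 3 = lam := by
    filter_upwards [hmem] with lam hlam
    rw [ht]
    simp only
    rw [← Real.rpow_natCast (lam ^ ((1:ℝ)/3)) 3, ← Real.rpow_mul (le_of_lt hlam)]
    norm_num
  have h23 : ∀ᶠ lam in l, lam ^ ((2:ℝ)/3) = (t lam) ^ 2 := by
    filter_upwards [hmem] with lam hlam
    rw [ht]
    simp only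
    rw [← Real.rpow_natCast (lam ^ ((1:ℝ)/3)) 2, ← Real.rpow_mul (le_of_lt hlam)]
    norm_num
  have hid : Tendsto (fun lam : ℝ => lam) l (𝓝 0) := by
    rw [hl]
    exact tendsto_id.mono_left nhdsWithin_le_nhds
  have htt : Tendsto t l (𝓝 0) := by
    have hco : ContinuousAt (fun x : ℝ => x ^ ((1:ℝ)/3)) 0 :=
      Real.continuousAt_rpow_const 0 _ (Or.inr (by norm_num))
    have := hco.tendsto.comp hid
    simpa [ht, Function.comp_def, Real.zero_rpow (by norm_num : (1:ℝ)/3 ≠ 0)] using this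
  -- polynomial pieces
  set Sf : ℝ → ℝ := fun u => 1 + γ * u + γ ^ 2 / 2 * u ^ 2 with hSf
  set Cf : ℝ → ℝ := fun u => cbar + α * u + β * u ^ 2 with hCf
  -- error terms
  have hec : (fun lam => c lam - Cf (t lam)) =O[l] (fun lam : ℝ => lam) := by
    refine hc.congr' ?_ EventuallyEq.rfl
    filter_upwards [h23] with lam h
    simp [hCf, ht, h]
  have hes : (fun lam => sbar lam - Sf (t lam)) =O[l] (fun lam : ℝ => lam) := by
    refine hs.congr' ?_ EventuallyEq.rfl
    filter_upwards [h23] with lam h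
    simp [hSf, ht, h]
  -- tendsto of composed polynomials
  have hCc : Continuous Cf := by rw [hCf]; continuity
  have hSc : Continuous Sf := by rw [hSf]; continuity
  have hCt : Tendsto (fun lam => Cf (t lam)) l (𝓝 cbar) := by
    have := (hCc.tendsto 0).comp htt
    simpa [hCf, Function.comp_def] using this
  have hSt : Tendsto (fun lam => Sf (t lam)) l (𝓝 1) := by
    have := (hSc.tendsto 0).comp htt
    simpa [hSf, Function.comp_def] using this
  have hctend : Tendsto c l (𝓝 cbar) := by
    have h0 : Tendsto (fun lam => c lam - Cf (t lam)) l (𝓝 0) := hec.trans_tendsto hid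
    have := h0.add hCt
    simpa using this
  have hstend : Tendsto sbar l (𝓝 1) := by
    have h0 : Tendsto (fun lam => sbar lam - Sf (t lam)) l (𝓝 0) := hes.trans_tendsto hid
    have := h0.add hSt
    simpa using this
  have h1cbne : (1:ℝ) + cbar ≠ 0 := by
    have h : (1:ℝ) + cbar = 1/θ := by rw [hcbar]; field_simp; ring
    rw [h]; positivity
  have hsc : Tendsto (fun lam => sbar lam + c lam) l (𝓝 (1 + cbar)) := hstend.add hctend
  have h1c : Tendsto (fun lam => 1 + c lam) l (𝓝 (1 + cbar)) := by
    simpa using (tendsto_const_nhds (x := (1:ℝ)) (f := l)).add hctend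
  have hs_ne : ∀ᶠ lam in l, sbar lam ≠ 0 := hstend.eventually_ne one_ne_zero
  have hsc_ne : ∀ᶠ lam in l, sbar lam + c lam ≠ 0 := hsc.eventually_ne h1cbne
  have h1c_ne : ∀ᶠ lam in l, 1 + c lam ≠ 0 := h1c.eventually_ne h1cbne
  -- helper: O(id) * O(1) = O(id)
  have mulO : ∀ {f g : ℝ → ℝ}, f =O[l] (fun lam : ℝ => lam) → g =O[l] (fun _ => (1:ℝ)) →
      (fun lam => f lam * g lam) =O[l] (fun lam : ℝ => lam) := by
    intro f g hf hg
    simpa using hf.mul hg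
  have mulO' : ∀ {f g : ℝ → ℝ}, g =O[l] (fun _ => (1:ℝ)) → f =O[l] (fun lam : ℝ => lam) →
      (fun lam => g lam * f lam) =O[l] (fun lam : ℝ => lam) := by
    intro f g hg hf
    simpa using hg.mul hf
  constructor
  · -- first goal
    set A : ℝ := θ * (1 - θ) / 2 * γ with hAdef
    set B : ℝ := δ * θ / (6 * σ ^ 2) * γ ^ 2 with hBdef
    set T1 : ℝ → ℝ := fun u => θ + A * u - B * u ^ 2 with hT1
    set Q1 : ℝ → ℝ := fun u => (B * (γ + α) - A * (γ ^ 2 / 2 + β))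
        + B * (γ ^ 2 / 2 + β) * u with hQ1
    have key1 : ∀ u : ℝ, Sf u - T1 u * (Sf u + Cf u) = u ^ 3 * Q1 u := by
      intro u
      simp only [hSf, hCf, hT1, hQ1, hAdef, hBdef, hcbar, hα, hβ]
      field_simp
      ring
    have hT1c : Continuous T1 := by rw [hT1]; continuity
    have hQ1c : Continuous Q1 := by rw [hQ1]; continuity
    have hT1t : Tendsto (fun lam => T1 (t lam)) l (𝓝 (T1 0)) := (hT1c.tendsto 0).comp htt
    have hQ1t : Tendsto (fun lam => Q1 (t lam)) l (𝓝 (Q1 0)) := (hQ1c.tendsto 0).comp htt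
    have hN : (fun lam => sbar lam - T1 (t lam) * (sbar lam + c lam))
        =O[l] (fun lam : ℝ => lam) := by
      have hdecomp : (fun lam => sbar lam - T1 (t lam) * (sbar lam + c lam)) =ᶠ[l]
          (fun lam => (sbar lam - Sf (t lam))
            - T1 (t lam) * ((sbar lam - Sf (t lam)) + (c lam - Cf (t lam)))
            + lam * Q1 (t lam)) := by
        filter_upwards [hcube] with lam h3
        linear_combination key1 (t lam) + Q1 (t lam) * h3
      refine IsBigO.congr' ?_ hdecomp.symm EventuallyEq.rfl
      exact (hes.sub (mulO' (hT1t.isBigO_one ℝ) (hes.add hec))).add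
        (mulO (isBigO_refl _ _) (hQ1t.isBigO_one ℝ))
    have hinvO : (fun lam => (sbar lam + c lam)⁻¹) =O[l] (fun _ => (1:ℝ)) :=
      (hsc.inv₀ h1cbne).isBigO_one ℝ
    have hprod := mulO hN hinvO
    refine hprod.congr' ?_ EventuallyEq.rfl
    filter_upwards [hs_ne, hsc_ne, h23] with lam h1 h2 hh
    rw [hh]
    have hden : 1 + c lam / sbar lam = (sbar lam + c lam) / sbar lam := by
      field_simp
    rw [hden]
    simp only [hT1]
    field_simp
    ring
  · -- width goal
    set A2 : ℝ := θ * (1 - θ) * γ with hA2def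
    set Q2 : ℝ → ℝ := fun u =>
        (γ * β + γ ^ 2 * α / 2
          - A2 * ((1 + cbar) * β + (γ + α) * α + (γ ^ 2 / 2 + β) * (1 + cbar)))
        + (γ ^ 2 * β / 2 - A2 * ((γ + α) * β + (γ ^ 2 / 2 + β) * α)) * u
        + (-(A2 * (γ ^ 2 / 2 + β) * β)) * u ^ 2 with hQ2
    have key2 : ∀ u : ℝ, Sf u * (1 + Cf u) - (Sf u + Cf u)
        - A2 * u * ((Sf u + Cf u) * (1 + Cf u)) = u ^ 3 * Q2 u := by
      intro u
      simp only [hSf, hCf, hQ2, hA2def, hcbar, hα]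
      field_simp
      ring
    have hQ2c : Continuous Q2 := by rw [hQ2]; continuity
    have hQ2t : Tendsto (fun lam => Q2 (t lam)) l (𝓝 (Q2 0)) := (hQ2c.tendsto 0).comp htt
    have hN2 : (fun lam => sbar lam * (1 + c lam) - (sbar lam + c lam)
        - A2 * t lam * ((sbar lam + c lam) * (1 + c lam))) =O[l] (fun lam : ℝ => lam) := by
      have hdecomp : (fun lam => sbar lam * (1 + c lam) - (sbar lam + c lam)
          - A2 * t lam * ((sbar lam + c lam) * (1 + c lam))) =ᶠ[l]
          (fun lam => lam * Q2 (t lam)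
            + (sbar lam - Sf (t lam)) * (1 + c lam)
            + Sf (t lam) * (c lam - Cf (t lam))
            - ((sbar lam - Sf (t lam)) + (c lam - Cf (t lam)))
            - A2 * t lam * (((sbar lam - Sf (t lam)) + (c lam - Cf (t lam))) * (1 + c lam)
                + (Sf (t lam) + Cf (t lam)) * (c lam - Cf (t lam)))) := by
        filter_upwards [hcube] with lam h3
        linear_combination key2 (t lam) + Q2 (t lam) * h3
      refine IsBigO.congr' ?_ hdecomp.symm EventuallyEq.rfl
      have hO1c : (fun lam => 1 + c lam) =O[l] (fun _ => (1:ℝ)) := h1c.isBigO_one ℝ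
      have hOSf : (fun lam => Sf (t lam)) =O[l] (fun _ => (1:ℝ)) := hSt.isBigO_one ℝ
      have hOSC : (fun lam => Sf (t lam) + Cf (t lam)) =O[l] (fun _ => (1:ℝ)) :=
        (hSt.add hCt).isBigO_one ℝ
      have hOt : (fun lam => A2 * t lam) =O[l] (fun _ => (1:ℝ)) :=
        (htt.const_mul A2).isBigO_one ℝ
      exact ((((mulO (isBigO_refl _ _) (hQ2t.isBigO_one ℝ)).add
          (mulO hes hO1c)).add
          (mulO' hOSf hec)).sub
          (hes.add hec)).sub
          (mulO' hOt ((mulO (hes.add hec) hO1c).add (mulO' hOSC hec)))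
    have hinvO : (fun lam => ((sbar lam + c lam) * (1 + c lam))⁻¹) =O[l] (fun _ => (1:ℝ)) :=
      ((hsc.mul h1c).inv₀ (mul_ne_zero h1cbne h1cbne)).isBigO_one ℝ
    have hprod := mulO hN2 hinvO
    refine hprod.congr' ?_ EventuallyEq.rfl
    filter_upwards [hs_ne, hsc_ne, h1c_ne] with lam h1 h2 h3
    have hden : 1 + c lam / sbar lam = (sbar lam + c lam) / sbar lam := by
      field_simp
    rw [hden]
    field_simp
    ring
end
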